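/- The inclusion functor U : FPCM → Mon from the category of trace monoids with basic homomorphisms into the category of all monoids has a right adjoint R, which sends a monoid M to the trace monoid M(M \ {1}, I_M) where I_M = {(μ₁,μ₂) | μ₁ ≠ μ₂, μ₁,μ₂ ≠ 1, μ₁μ₂ = μ₂μ₁}, with counit ε_M : M(M \ {1}, I_M) → M defined on generators by ε_M(μ) = μ. -/

import Mathlib

open CategoryTheory

/-- The elementary commutation relation on words generated by an independence relation. -/
def traceRel (E : Type) (I : Set (E × E)) : FreeMonoid E → FreeMonoid E → Prop :=
  fun x y => ∃ a b : E, (a, b) ∈ I ∧ x = FreeMonoid.of a * FreeMonoid.of b ∧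
    y = FreeMonoid.of b * FreeMonoid.of a

/-- The congruence on the free monoid generated by commutation of independent pairs. -/
def traceCon (E : Type) (I : Set (E × E)) : Con (FreeMonoid E) := conGen (traceRel E I)

/-- The trace monoid `M(E,I)`. -/
abbrev TraceMonoid (E : Type) (I : Set (E × E)) : Type := (traceCon E I).Quotient

/-- The canonical projection from words to traces. -/
def trcMk {E : Type} {I : Set (E × E)} : FreeMonoid E →* TraceMonoid E I :=
  (traceCon E I).mk'

/-- The generator of the trace monoid corresponding to an event `e`. -/
def trc {E : Type} {I : Set (E × E)} (e : E) : TraceMonoid E I :=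
  trcMk (FreeMonoid.of e)

/-- `I` is an independence relation: irreflexive and symmetric. -/
structure IsIndep {E : Type} (I : Set (E × E)) : Prop where
  irrefl : ∀ a : E, (a, a) ∉ I
  symm : ∀ a b : E, (a, b) ∈ I → (b, a) ∈ I

/-- A homomorphism of trace monoids is basic if it sends generators to generators or to `1`. -/
def IsBasic {E E' : Type} {I : Set (E × E)} {I' : Set (E' × E')}
    (f : TraceMonoid E I →* TraceMonoid E' I') : Prop :=
  ∀ e : E, (∃ e' : E', f (trc e) = trc e') ∨ f (trc e) = 1

/-- A basic homomorphism preserves independence. -/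
def IsIndepPres {E E' : Type} {I : Set (E × E)} {I' : Set (E' × E')}
    (f : TraceMonoid E I →* TraceMonoid E' I') : Prop :=
  ∀ a b : E, (a, b) ∈ I → f (trc a) ≠ f (trc b) ∨ (f (trc a) = 1 ∧ f (trc b) = 1)

/-- The monoid homomorphism out of a trace monoid induced by a map on generators whose
images commute at independent pairs. -/
def liftHom {E : Type} {I : Set (E × E)} {N : Type*} [Monoid N] (φ : E → N)
    (hφ : ∀ a b : E, (a, b) ∈ I → φ a * φ b = φ b * φ a) : TraceMonoid E I →* N :=
  (traceCon E I).lift (FreeMonoid.lift φ) (by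
    refine Con.conGen_le.2 fun x y h => ?_
    obtain ⟨a, b, hab, rfl, rfl⟩ := h
    rw [Con.ker_rel]
    simp only [map_mul, FreeMonoid.lift_eval_of]
    exact hφ a b hab)

@[simp] theorem liftHom_trc {E : Type} {I : Set (E × E)} {N : Type*} [Monoid N] (φ : E → N)
    (hφ : ∀ a b : E, (a, b) ∈ I → φ a * φ b = φ b * φ a) (e : E) :
    liftHom φ hφ (trc (I := I) e) = φ e := by
  show (traceCon E I).lift _ _ ((traceCon E I).mk' (FreeMonoid.of e)) = φ e
  show FreeMonoid.lift φ (FreeMonoid.of e) = φ e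
  simp

theorem trc_comm {E : Type} {I : Set (E × E)} {a b : E} (h : (a, b) ∈ I) :
    (trc a : TraceMonoid E I) * trc b = trc b * trc a := by
  show trcMk (FreeMonoid.of a) * trcMk (FreeMonoid.of b) =
    trcMk (FreeMonoid.of b) * trcMk (FreeMonoid.of a)
  rw [← map_mul, ← map_mul]
  exact (Con.eq _).2 (ConGen.Rel.of _ _ ⟨a, b, h, rfl, rfl⟩)

theorem isBasic_id {E : Type} {I : Set (E × E)} :
    IsBasic (MonoidHom.id (TraceMonoid E I)) := fun e => Or.inl ⟨e, rfl⟩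

theorem isBasic_comp {E₁ E₂ E₃ : Type} {I₁ : Set (E₁ × E₁)} {I₂ : Set (E₂ × E₂)}
    {I₃ : Set (E₃ × E₃)} {f : TraceMonoid E₁ I₁ →* TraceMonoid E₂ I₂}
    {g : TraceMonoid E₂ I₂ →* TraceMonoid E₃ I₃} (hf : IsBasic f) (hg : IsBasic g) :
    IsBasic (g.comp f) := by
  intro e
  rcases hf e with ⟨e', he⟩ | he
  · rcases hg e' with ⟨e'', he''⟩ | he''
    · exact Or.inl ⟨e'', by simp [MonoidHom.comp_apply, he, he'']⟩
    · exact Or.inr (by simp [MonoidHom.comp_apply, he, he''])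
  · exact Or.inr (by simp [MonoidHom.comp_apply, he])
/-- An object of the category `FPCM`: a set of events with an independence relation. -/
structure FPCMObj where
  E : Type
  I : Set (E × E)
  indep : IsIndep I

/-- The category `FPCM` of trace monoids and basic homomorphisms. -/
instance : Category FPCMObj where
  Hom X Y := {f : TraceMonoid X.E X.I →* TraceMonoid Y.E Y.I // IsBasic f}
  id _ := ⟨MonoidHom.id _, isBasic_id⟩
  comp f g := ⟨g.1.comp f.1, isBasic_comp f.2 g.2⟩
  id_comp _ := Subtype.ext (MonoidHom.comp_id _)
  comp_id _ := Subtype.ext (MonoidHom.id_comp _)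
  assoc _ _ _ := Subtype.ext rfl

/-- The inclusion functor from `FPCM` into the category of monoids. -/
def UFPCM : FPCMObj ⥤ MonCat.{0} where
  obj X := MonCat.of (TraceMonoid X.E X.I)
  map f := MonCat.ofHom f.1
  map_id _ := rfl
  map_comp _ _ := rfl

/-- The independence relation on the non-identity elements of a monoid given by distinct
commuting pairs. -/
def IMon (M : Type) [Monoid M] : Set ({m : M // m ≠ 1} × {m : M // m ≠ 1}) :=
  {p | p.1 ≠ p.2 ∧ (p.1 : M) * (p.2 : M) = (p.2 : M) * (p.1 : M)}

/-- The trace monoid `M(M \ {1}, I_M)` associated to a monoid `M`. -/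
def RFPCMObj (M : MonCat.{0}) : FPCMObj where
  E := {m : M // m ≠ 1}
  I := IMon M
  indep := ⟨fun _ h => h.1 rfl, fun _ _ h => ⟨fun e => h.1 e.symm, h.2.symm⟩⟩

/-- The counit homomorphism `ε_M : M(M \ {1}, I_M) → M`, defined on generators by
`ε_M(μ) = μ`. -/
def epsFPCM (M : MonCat.{0}) :
    TraceMonoid (RFPCMObj M).E (RFPCMObj M).I →* M :=
  liftHom (fun m : {m : M // m ≠ 1} => m.val) (fun _ _ h => h.2)

/-! ### Auxiliary constructions for the adjunction -/

theorem traceHom_ext {E : Type} {I : Set (E × E)} {N : Type*} [Monoid N]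
    {f g : TraceMonoid E I →* N} (h : ∀ e, f (trc e) = g (trc e)) : f = g := by
  have : f.comp trcMk = g.comp trcMk := FreeMonoid.hom_eq h
  apply MonoidHom.ext; intro x
  obtain ⟨w, rfl⟩ := Con.mk'_surjective x
  exact DFunLike.congr_fun this w

/-- Sends `m : M` to the corresponding generator of `M(M \\ {1}, I_M)`, or `1` if `m = 1`. -/
noncomputable def toTrc {M : MonCat.{0}} (m : M) : TraceMonoid (RFPCMObj M).E (RFPCMObj M).I :=
  @dite _ (m = 1) (Classical.dec _) (fun _ => 1) (fun h => trc (I := (RFPCMObj M).I) ⟨m, h⟩)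

@[simp] theorem toTrc_one {M : MonCat.{0}} : toTrc (1 : M) = 1 := dif_pos rfl

theorem toTrc_ne {M : MonCat.{0}} (m : M) (h : m ≠ 1) :
    toTrc m = trc (I := (RFPCMObj M).I) ⟨m, h⟩ := dif_neg h

theorem toTrc_comm {M : MonCat.{0}} (m n : M) (h : m * n = n * m) :
    toTrc m * toTrc n = toTrc n * toTrc m := by
  by_cases h1 : m = 1
  · simp [h1]
  by_cases h2 : n = 1
  · simp [h2]
  rw [toTrc_ne m h1, toTrc_ne n h2]
  by_cases he : m = n
  · subst he; rfl
  · exact trc_comm ⟨fun hc => he (congrArg Subtype.val hc), h⟩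

@[simp] theorem eps_toTrc {M : MonCat.{0}} (m : M) : epsFPCM M (toTrc m) = m := by
  by_cases h1 : m = 1
  · simp [h1]
  · rw [toTrc_ne m h1]; exact liftHom_trc _ _ _

/-- The unique basic lift of a homomorphism `f : M(E,I) → M`. -/
noncomputable def barHom {E : Type} {I : Set (E × E)} {M : MonCat.{0}}
    (f : TraceMonoid E I →* M) :
    TraceMonoid E I →* TraceMonoid (RFPCMObj M).E (RFPCMObj M).I :=
  liftHom (fun e => toTrc (f (trc e))) (fun a b hab => toTrc_comm _ _ (by
    rw [← map_mul, ← map_mul, trc_comm hab]))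

@[simp] theorem barHom_trc {E : Type} {I : Set (E × E)} {M : MonCat.{0}}
    (f : TraceMonoid E I →* M) (e : E) : barHom f (trc e) = toTrc (f (trc e)) :=
  liftHom_trc _ _ _

theorem barHom_basic {E : Type} {I : Set (E × E)} {M : MonCat.{0}}
    (f : TraceMonoid E I →* M) : IsBasic (barHom f) := by
  intro e
  rw [barHom_trc]
  by_cases h1 : f (trc e) = 1
  · exact Or.inr (by rw [h1, toTrc_one])
  · exact Or.inl ⟨_, toTrc_ne _ h1⟩

theorem eps_barHom {E : Type} {I : Set (E × E)} {M : MonCat.{0}}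
    (f : TraceMonoid E I →* M) : (epsFPCM M).comp (barHom f) = f :=
  traceHom_ext fun e => by simp

theorem eps_trc {M : MonCat.{0}} (μ : (RFPCMObj M).E) : epsFPCM M (trc μ) = μ.val :=
  liftHom_trc _ _ _

theorem barHom_toTrc {M N : MonCat.{0}} (g : M →* N) (m : M) :
    barHom (g.comp (epsFPCM M)) (toTrc m) = toTrc (g m) := by
  by_cases h1 : m = 1
  · subst h1; simp only [toTrc_one, map_one]
  · rw [toTrc_ne m h1]; erw [barHom_trc]
    have h2 : (g.comp (epsFPCM M)) (trc (I := (RFPCMObj M).I) ⟨m, h1⟩) = g m := by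
      rw [MonoidHom.comp_apply]; erw [eps_trc]
    rw [h2]

/-- The right adjoint `R : Mon → FPCM`. -/
noncomputable def RFPCM : MonCat.{0} ⥤ FPCMObj where
  obj M := RFPCMObj M
  map {M N} g := ⟨barHom (g.hom.comp (epsFPCM M)), barHom_basic _⟩
  map_id M := Subtype.ext (traceHom_ext fun μ => by
    show barHom ((MonoidHom.id M).comp (epsFPCM M)) (trc μ) = trc μ
    rw [barHom_trc]
    have h2 : ((MonoidHom.id M).comp (epsFPCM M)) (trc μ) = μ.val := by
      rw [MonoidHom.comp_apply, MonoidHom.id_apply, eps_trc]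
    rw [h2, toTrc_ne _ μ.2]
    rfl)
  map_comp {M N P} g h := Subtype.ext (traceHom_ext fun μ => by
    show barHom ((g ≫ h).hom.comp (epsFPCM M)) (trc μ) =
      barHom (h.hom.comp (epsFPCM N)) (barHom (g.hom.comp (epsFPCM M)) (trc μ))
    rw [barHom_trc, barHom_trc]
    have h1 : ((g ≫ h).hom.comp (epsFPCM M)) (trc μ)
        = h.hom ((g.hom.comp (epsFPCM M)) (trc μ)) := rfl
    rw [h1, barHom_toTrc])

/-- The adjunction `U ⊣ R`. -/
noncomputable def adjFPCM : UFPCM ⊣ RFPCM :=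
  Adjunction.mkOfHomEquiv
    { homEquiv := fun X M =>
        { toFun := fun f => ⟨barHom f.hom, barHom_basic f.hom⟩
          invFun := fun g => MonCat.ofHom ((epsFPCM M).comp g.1)
          left_inv := fun f => congrArg MonCat.ofHom (eps_barHom f.hom)
          right_inv := fun g => Subtype.ext (traceHom_ext fun e => by
            have hb : IsBasic (show TraceMonoid X.E X.I →*
                TraceMonoid (RFPCMObj M).E (RFPCMObj M).I from g.1) := g.2
            show barHom ((epsFPCM M).comp (show TraceMonoid X.E X.I →*
                TraceMonoid (RFPCMObj M).E (RFPCMObj M).I from g.1)) (trc e)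
              = (show TraceMonoid X.E X.I →*
                TraceMonoid (RFPCMObj M).E (RFPCMObj M).I from g.1) (trc e)
            rw [barHom_trc, MonoidHom.comp_apply]
            rcases hb e with ⟨μ, hμ⟩ | hμ
            · rw [hμ, eps_trc, toTrc_ne _ μ.2]
              rfl
            · rw [hμ, map_one, toTrc_one]) }
      homEquiv_naturality_left_symm := fun f g => rfl
      homEquiv_naturality_right := fun {X M N} f g => Subtype.ext (traceHom_ext fun e => by
        show barHom (f ≫ g).hom (trc e)
          = barHom (g.hom.comp (epsFPCM M)) (barHom f.hom (trc e))
        erw [barHom_trc, barHom_trc, barHom_toTrc]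
        rfl) }

/-- The inclusion functor `U : FPCM → Mon` has a right adjoint `R`, sending a monoid `M` to
the trace monoid `M(M \ {1}, I_M)`, and the counit is given on generators by `ε_M(μ) = μ`. -/
theorem fpcm_inclusion_has_right_adjoint :
    ∃ (R : MonCat.{0} ⥤ FPCMObj) (hobj : ∀ M : MonCat.{0}, R.obj M = RFPCMObj M)
      (adj : UFPCM ⊣ R), ∀ M : MonCat.{0},
        adj.counit.app M =
          CategoryTheory.eqToHom (congrArg UFPCM.obj (hobj M)) ≫ MonCat.ofHom (epsFPCM M) := by
  refine ⟨RFPCM, fun M => rfl, adjFPCM, fun M => ?_⟩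
  erw [eqToHom_refl, Category.id_comp]
  show MonCat.ofHom ((epsFPCM M).comp (MonoidHom.id _)) = MonCat.ofHom (epsFPCM M)
  rw [MonoidHom.comp_id]
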